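/- Let R → S → T be surjective homomorphisms of noetherian local rings, with α : R → S, β : S → T, and let M be a finitely generated T-module. If M is inert by any two of the three homomorphisms α, β, β∘α, then M is inert by the third as well. -/

import Mathlib

open CategoryTheory CategoryTheory.MonoidalCategory CategoryTheory.Abelian
open IsLocalRing PowerSeries TensorProduct HomologicalComplex

noncomputable section

set_option maxHeartbeats 1000000

/-- The length of a module, as a natural number: the Krull dimension of its lattice of
submodules.  For a finite length module this is the usual length; for a module annihilated
by the maximal ideal of a local ring it is the dimension over the residue field. -/
def lengthNat (R : Type) [CommRing R] (M : Type) [AddCommGroup M] [Module R M] : ℕ :=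
  (WithBot.unbotD 0 (Order.krullDim (Submodule R M))).toNat

/-- The residue field of a local ring, as an object of its module category. -/
def resFld (R : Type) [CommRing R] [IsLocalRing R] : ModuleCat R :=
  ModuleCat.of R (IsLocalRing.ResidueField R)

/-- The `i`-th Tor module `Tor_i^R(M, N)`. -/
def TorM (R : Type) [CommRing R] (i : ℕ) (M N : ModuleCat R) : ModuleCat R :=
  ((CategoryTheory.Tor (ModuleCat R) i).obj M).obj N

/-- The map `Tor_i^R(f, N) : Tor_i^R(M, N) → Tor_i^R(M', N)` induced in the first variable
by `f : M → M'`. -/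
def TorMap (R : Type) [CommRing R] (i : ℕ) {M M' : ModuleCat R} (f : M ⟶ M')
    (N : ModuleCat R) : TorM R i M N ⟶ TorM R i M' N :=
  ((CategoryTheory.Tor (ModuleCat R) i).map f).app N

/-- The Poincaré series `P^R_M(z) = Σ_i rank_k Tor_i^R(M, k) zⁱ` of a module `M` over a
local ring `R` with residue field `k`. -/
def poincareSeries (R : Type) [CommRing R] [IsLocalRing R] (M : ModuleCat R) :
    PowerSeries ℚ :=
  PowerSeries.mk fun i => (lengthNat R (TorM R i M (resFld R)) : ℚ)

/-- A surjective local homomorphism `φ : R → S` is Golod if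
`P^S_k(z)·(1 - z·(P^R_S(z) - 1)) = P^R_k(z)`, where `P^R_S` is the Poincaré series of `S`
viewed as an `R`-module via `φ`. -/
def IsGolodHom {R S : Type} [CommRing R] [CommRing S] [IsLocalRing R] [IsLocalRing S]
    (φ : R →+* S) : Prop :=
  poincareSeries S (resFld S) *
      (1 - PowerSeries.X *
        (poincareSeries R ((ModuleCat.restrictScalars φ).obj (ModuleCat.of S S)) - 1)) =
    poincareSeries R (resFld R)

/-- An `R`-module `M` is inert by a surjective local homomorphism `κ : P → R` if
`P^R_k(z)·P^P_M(z) = P^P_k(z)·P^R_M(z)`. -/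
def IsInertBy {P R : Type} [CommRing P] [CommRing R] [IsLocalRing P] [IsLocalRing R]
    (κ : P →+* R) (M : ModuleCat R) : Prop :=
  poincareSeries R (resFld R) * poincareSeries P ((ModuleCat.restrictScalars κ).obj M) =
    poincareSeries P (resFld P) * poincareSeries R M


lemma krullDim_eq_one_of_isSimpleOrder (α : Type*) [PartialOrder α] [BoundedOrder α]
    [IsSimpleOrder α] : Order.krullDim α = 1 := by
  apply le_antisymm
  · apply iSup_le
    intro p
    rcases le_or_gt p.length 1 with h | h
    · exact_mod_cast h
    · exfalso
      have h01 : p ⟨0, by omega⟩ < p ⟨1, by omega⟩ := p.strictMono (by simp [Fin.lt_def])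
      have h12 : p ⟨1, by omega⟩ < p ⟨2, by omega⟩ := p.strictMono (by simp [Fin.lt_def])
      rcases IsSimpleOrder.eq_bot_or_eq_top (p ⟨1, by omega⟩) with h1 | h1
      · rw [h1] at h01; exact not_lt_bot h01
      · rw [h1] at h12; exact not_top_lt h12
  · have : (1 : WithBot ℕ∞) = ((RelSeries.singleton _ (⊥ : α) : LTSeries α).snoc ⊤
        (by simp)).length := by simp
    rw [this]
    exact Order.LTSeries.length_le_krullDim _

lemma lengthNat_congr {R : Type} [CommRing R] {M N : Type} [AddCommGroup M] [Module R M]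
    [AddCommGroup N] [Module R N] (e : M ≃ₗ[R] N) : lengthNat R M = lengthNat R N := by
  unfold lengthNat
  rw [Order.krullDim_eq_of_orderIso (Submodule.orderIsoMapComap e)]

lemma lengthNat_of_isSimpleModule {R : Type} [CommRing R] (M : Type) [AddCommGroup M]
    [Module R M] [IsSimpleModule R M] : lengthNat R M = 1 := by
  unfold lengthNat
  rw [krullDim_eq_one_of_isSimpleOrder]
  rfl

lemma isSimpleModule_resFld (R : Type) [CommRing R] [IsLocalRing R] :
    IsSimpleModule R (IsLocalRing.ResidueField R) :=
  (isSimpleModule_iff_isCoatom).mpr ((Ideal.isMaximal_def).mp (maximalIdeal.isMaximal R))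

/-- `Tor_0` is the tensor product. -/
def torZeroIso (R : Type) [CommRing R] (M N : ModuleCat R) :
    TorM R 0 M N ≅ ModuleCat.of R (M ⊗[R] N) := by
  haveI : Limits.PreservesFiniteColimits ((tensoringLeft (ModuleCat R)).obj M) :=
    Limits.PreservesColimits.preservesFiniteColimits (tensorLeft M)
  exact (Functor.leftDerivedZeroIsoSelf ((tensoringLeft (ModuleCat R)).obj M)).app N

lemma smul_top_resFld_eq_bot (R : Type) [CommRing R] [IsLocalRing R] :
    (maximalIdeal R • ⊤ : Submodule R (IsLocalRing.ResidueField R)) = ⊥ := by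
  rw [eq_bot_iff]
  apply Submodule.smul_le.mpr
  intro r hr n _
  obtain ⟨y, rfl⟩ := Ideal.Quotient.mk_surjective n
  have : r • (Ideal.Quotient.mk (maximalIdeal R) y) = Ideal.Quotient.mk (maximalIdeal R) (r * y) := rfl
  rw [Submodule.mem_bot]; refine Eq.trans this ?_
  exact Ideal.Quotient.eq_zero_iff_mem.mpr (Ideal.mul_mem_right y _ hr)

/-- `k ⊗ k ≃ k` for the residue field of a local ring. -/
def resFldTensorEquiv (R : Type) [CommRing R] [IsLocalRing R] :
    (IsLocalRing.ResidueField R) ⊗[R] (IsLocalRing.ResidueField R) ≃ₗ[R]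
      IsLocalRing.ResidueField R :=
  (TensorProduct.quotTensorEquivQuotSMul (IsLocalRing.ResidueField R) (maximalIdeal R)) ≪≫ₗ
    Submodule.quotEquivOfEqBot _ (smul_top_resFld_eq_bot R)

lemma lengthNat_tor_zero (R : Type) [CommRing R] [IsLocalRing R] :
    lengthNat R (TorM R 0 (resFld R) (resFld R)) = 1 := by
  haveI := isSimpleModule_resFld R
  exact (lengthNat_congr ((torZeroIso R (resFld R) (resFld R)).toLinearEquiv)).trans
    ((lengthNat_congr (resFldTensorEquiv R)).trans (lengthNat_of_isSimpleModule _))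

lemma poincareSeries_resFld_ne_zero (R : Type) [CommRing R] [IsLocalRing R] :
    poincareSeries R (resFld R) ≠ 0 := by
  intro h
  have := congrArg (PowerSeries.coeff 0) h
  rw [poincareSeries, PowerSeries.coeff_mk, lengthNat_tor_zero R] at this
  simpa using this

/-- Remark 2.4.  Let `α : R → S`, `β : S → T` be surjective local
homomorphisms and `M` a finitely generated `T`-module.  If `M` is inert by any two of
`α`, `β`, `β∘α`, then it is inert by the third. -/
theorem statement10 (R S T : Type) [CommRing R] [CommRing S] [CommRing T]
    [IsLocalRing R] [IsLocalRing S] [IsLocalRing T]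
    (α : R →+* S) (β : S →+* T) (hα : Function.Surjective α) (hβ : Function.Surjective β)
    (M : ModuleCat T) [Module.Finite T M] :
    ((IsInertBy β M ∧ IsInertBy α ((ModuleCat.restrictScalars β).obj M)) →
        IsInertBy (β.comp α) M) ∧
    ((IsInertBy β M ∧ IsInertBy (β.comp α) M) →
        IsInertBy α ((ModuleCat.restrictScalars β).obj M)) ∧
    ((IsInertBy α ((ModuleCat.restrictScalars β).obj M) ∧ IsInertBy (β.comp α) M) →
        IsInertBy β M) := by
  have hMR : poincareSeries R
      ((ModuleCat.restrictScalars α).obj ((ModuleCat.restrictScalars β).obj M)) =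
      poincareSeries R ((ModuleCat.restrictScalars (β.comp α)).obj M) := rfl
  unfold IsInertBy
  rw [hMR]
  set p := poincareSeries S (resFld S) with hpdef
  set q := poincareSeries T (resFld T) with hqdef
  set r := poincareSeries R (resFld R) with hrdef
  set mS := poincareSeries S ((ModuleCat.restrictScalars β).obj M)
  set mT := poincareSeries T M
  set mR := poincareSeries R ((ModuleCat.restrictScalars (β.comp α)).obj M)
  have hp : p ≠ 0 := poincareSeries_resFld_ne_zero S
  have hq : q ≠ 0 := poincareSeries_resFld_ne_zero T
  have hr : r ≠ 0 := poincareSeries_resFld_ne_zero R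
  refine ⟨fun ⟨h1, h2⟩ => ?_, fun ⟨h1, h3⟩ => ?_, fun ⟨h2, h3⟩ => ?_⟩
  · apply mul_left_cancel₀ hp
    linear_combination q * h2 + r * h1
  · apply mul_left_cancel₀ hq
    linear_combination p * h3 - r * h1
  · apply mul_left_cancel₀ hr
    linear_combination p * h3 - q * h2


end
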